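/- Suppose there exists S̄ ∈ (S*,S_in) with p0·μ(S_in) < p0·μ(S̄) < b and μ'(S) ≤ 0 for all S ∈ [S̄,S_in]; set θ := b − p0·μ(S̄) > 0. Let β > 0 satisfy (b+D*)·g(β) = b − θ and suppose g'(z) ≤ 0 for all z ≥ β, and let x̄2 > β satisfy g(x̄2) < g(β). Define M := max{|μ'(S_in·ξ)| : e^β/(κ+e^β) ≤ ξ ≤ 1} and G := 1 + p0·κ·S_in·M/((b+D*)(κ+e^β)). Then for every locally Lipschitz D : ℝ² → ℝ with D ≥ 0, every continuously differentiable solution x = (x1,x2) : [0,∞) → ℝ² of the closed-loop system x1' = b(g(x2)−1) + D*·g(x2)(1−e^{x1}), x2' = p(x2)(D(x) − D*·g(x2)·e^{x1}) whose initial condition satisfies x2(0) = x̄2 and θ + (b+D*)·g(x̄2) + (κ+1)·(G·b·D*/θ)·e^{x1(0)} ≤ b satisfies x2(t) ≥ β for all t ≥ 0. -/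

import Mathlib

set_option maxHeartbeats 4000000

private lemma aux_p_deriv (κ z : ℝ) :
    HasDerivAt (fun z : ℝ => κ * Real.exp (-z) + 1) (-(κ * Real.exp (-z))) z := by
  have h := (((hasDerivAt_id z).neg).exp.const_mul κ).add_const 1
  exact h.congr_deriv (by simp)

private lemma aux_q_deriv (S_in κ : ℝ) (hκ : 0 < κ) (z : ℝ) :
    HasDerivAt (fun z : ℝ => S_in / (κ * Real.exp (-z) + 1))
      (S_in * (κ * Real.exp (-z)) / (κ * Real.exp (-z) + 1) ^ 2) z := by
  have hpos : (0:ℝ) < κ * Real.exp (-z) + 1 := by positivity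
  have h := (hasDerivAt_const z S_in).div (aux_p_deriv κ z) hpos.ne'
  exact h.congr_deriv (by ring)

private lemma aux_g_deriv (μ : ℝ → ℝ) (S_in Sstar κ : ℝ) (hκ : 0 < κ) (hSin : 0 < S_in)
    (hμ_C1 : ContDiffOn ℝ 1 μ (Set.Ici 0)) (z : ℝ) :
    HasDerivAt (fun z : ℝ => μ (S_in / (κ * Real.exp (-z) + 1)) / μ Sstar)
      (deriv μ (S_in / (κ * Real.exp (-z) + 1)) *
        (S_in * (κ * Real.exp (-z)) / (κ * Real.exp (-z) + 1) ^ 2) / μ Sstar) z := by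
  have hpos : (0:ℝ) < κ * Real.exp (-z) + 1 := by positivity
  have hqpos : 0 < S_in / (κ * Real.exp (-z) + 1) := by positivity
  have hμd : DifferentiableAt ℝ μ (S_in / (κ * Real.exp (-z) + 1)) :=
    (hμ_C1.contDiffAt (Ici_mem_nhds hqpos)).differentiableAt one_ne_zero
  have h := (hμd.hasDerivAt.comp z (aux_q_deriv S_in κ hκ z)).div_const (μ Sstar)
  exact h

/-- Under the assumptions of Theorem 2 together with the constants β,
x̄2, M, G, every solution of the closed-loop system whose initial condition
satisfies x2(0) = x̄2 and θ + (b+D*)g(x̄2) + (κ+1)(GbD*/θ)e^{x1(0)} ≤ b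
satisfies x2(t) ≥ β for all t ≥ 0. -/
theorem stmt_9
    (S_in Sstar p0 b Dstar : ℝ) (μ : ℝ → ℝ)
    (hSin : 0 < S_in) (hSstar : Sstar ∈ Set.Ioo 0 S_in)
    (hp0 : 0 < p0) (hb : 0 ≤ b) (hDstar : 0 < Dstar)
    (hμ_bdd : BddAbove (Set.range μ))
    (hμ_C1 : ContDiffOn ℝ 1 μ (Set.Ici 0))
    (hμ_nonneg : ∀ S, 0 ≤ S → 0 ≤ μ S)
    (hμ_zero : μ 0 = 0) (hμ_pos : ∀ S, 0 < S → 0 < μ S)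
    (heq : p0 * μ Sstar = b + Dstar)
    (κ : ℝ) (hκ : κ = (S_in - Sstar) / Sstar)
    (p g : ℝ → ℝ)
    (hp : ∀ z, p z = κ * Real.exp (-z) + 1)
    (hg : ∀ z, g z = μ (S_in / p z) / μ Sstar)
    (Sbar : ℝ) (hSbar : Sbar ∈ Set.Ioo Sstar S_in)
    (h1 : p0 * μ S_in < p0 * μ Sbar) (h2 : p0 * μ Sbar < b)
    (h3 : ∀ S ∈ Set.Icc Sbar S_in, deriv μ S ≤ 0)
    (θ : ℝ) (hθ : θ = b - p0 * μ Sbar)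
    (β : ℝ) (hβpos : 0 < β) (hβ : (b + Dstar) * g β = b - θ)
    (hg'β : ∀ z, β ≤ z → deriv g z ≤ 0)
    (x2bar : ℝ) (hx2bar : β < x2bar) (hgx2bar : g x2bar < g β)
    (M : ℝ)
    (hM : IsGreatest ((fun ξ => |deriv μ (S_in * ξ)|) ''
            Set.Icc (Real.exp β / (κ + Real.exp β)) 1) M)
    (G : ℝ)
    (hG : G = 1 + p0 * κ * S_in * M / ((b + Dstar) * (κ + Real.exp β))) :
    ∀ D : ℝ × ℝ → ℝ, LocallyLipschitz D → (∀ x, 0 ≤ D x) →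
      ∀ x : ℝ → ℝ × ℝ,
        (∀ t, 0 ≤ t → HasDerivAt x
          ((b * (g (x t).2 - 1) + Dstar * g (x t).2 * (1 - Real.exp (x t).1),
            p (x t).2 * (D (x t) - Dstar * g (x t).2 * Real.exp (x t).1)) : ℝ × ℝ) t) →
        (x 0).2 = x2bar →
        θ + (b + Dstar) * g x2bar +
          (κ + 1) * (G * b * Dstar / θ) * Real.exp (x 0).1 ≤ b →
        ∀ t, 0 ≤ t → β ≤ (x t).2 := by
  -- ambient positivity facts
  have hSs0 : 0 < Sstar := hSstar.1
  have hκpos : 0 < κ := by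
    rw [hκ]; exact div_pos (by linarith [hSstar.2]) hSs0
  have hμS : 0 < μ Sstar := hμ_pos _ hSs0
  have hbD : 0 < b + Dstar := by linarith
  have hθpos : 0 < θ := by rw [hθ]; linarith
  have hbθ : 0 < b - θ := by
    rw [hθ]
    have := hμ_pos Sbar (lt_trans hSs0 hSbar.1)
    nlinarith
  have hbpos : 0 < b := by linarith
  have hgβpos : 0 < g β := by nlinarith
  have hM0 : 0 ≤ M := by
    obtain ⟨ξ, -, hξ⟩ := hM.1
    rw [← hξ]; exact abs_nonneg _
  have hG1 : 1 ≤ G := by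
    rw [hG]
    have : 0 ≤ p0 * κ * S_in * M / ((b + Dstar) * (κ + Real.exp β)) := by
      apply div_nonneg
      · positivity
      · positivity
    linarith
  have hμSval : μ Sstar = (b + Dstar) / p0 := by
    field_simp
    linarith [heq]
  have hgfun : g = fun z : ℝ => μ (S_in / (κ * Real.exp (-z) + 1)) / μ Sstar := by
    funext z; rw [hg z, hp z]
  have hgd : ∀ z : ℝ, HasDerivAt g
      (deriv μ (S_in / (κ * Real.exp (-z) + 1)) *
        (S_in * (κ * Real.exp (-z)) / (κ * Real.exp (-z) + 1) ^ 2) / μ Sstar) z := by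
    intro z
    rw [hgfun]
    exact aux_g_deriv μ S_in Sstar κ hκpos hSin hμ_C1 z
  have hgdiff : ∀ z : ℝ, DifferentiableAt ℝ g z := fun z => (hgd z).differentiableAt
  have hg_nonneg : ∀ z : ℝ, 0 ≤ g z := by
    intro z
    rw [hg z, hp z]
    have : (0:ℝ) < κ * Real.exp (-z) + 1 := by positivity
    exact div_nonneg (hμ_nonneg _ (by positivity)) hμS.le
  -- g is antitone on [β, ∞)
  have hg_anti : AntitoneOn g (Set.Ici β) := by
    apply antitoneOn_of_deriv_nonpos (convex_Ici β)
    · exact fun z _ => (hgdiff z).continuousAt.continuousWithinAt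
    · rw [interior_Ici]
      exact fun z _ => (hgdiff z).differentiableWithinAt
    · rw [interior_Ici]
      exact fun z hz => hg'β z (le_of_lt hz)
  -- bound on |deriv g| on [β, ∞)
  have hgL : ∀ z : ℝ, β ≤ z → ‖deriv g z‖ ≤ G - 1 := by
    intro z hz
    rw [Real.norm_eq_abs, (hgd z).deriv]
    have hpz : (0:ℝ) < κ * Real.exp (-z) + 1 := by positivity
    have hwnn : 0 ≤ S_in * (κ * Real.exp (-z)) / (κ * Real.exp (-z) + 1) ^ 2 := by positivity
    rw [abs_div, abs_mul, abs_of_nonneg hwnn, abs_of_pos hμS]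
    -- |deriv μ| ≤ M at the relevant point
    have hqξ : S_in / (κ * Real.exp (-z) + 1) = S_in * (Real.exp z / (κ + Real.exp z)) := by
      rw [Real.exp_neg]
      have h1 : Real.exp z ≠ 0 := (Real.exp_pos z).ne'
      have h2 : κ + Real.exp z ≠ 0 := by positivity
      field_simp
    have hξmem : Real.exp z / (κ + Real.exp z) ∈
        Set.Icc (Real.exp β / (κ + Real.exp β)) 1 := by
      constructor
      · rw [div_le_div_iff₀ (by positivity) (by positivity)]
        have := Real.exp_le_exp.2 hz
        nlinarith
      · rw [div_le_one (by positivity)]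
        linarith [Real.exp_pos z]
    have hμle : |deriv μ (S_in / (κ * Real.exp (-z) + 1))| ≤ M := by
      rw [hqξ]
      exact hM.2 ⟨_, hξmem, rfl⟩
    -- the weight bound
    have hkey2 : Real.exp (-z) / (κ * Real.exp (-z) + 1) ^ 2 ≤ 1 / (κ + Real.exp β) := by
      rw [div_le_div_iff₀ (by positivity) (by positivity)]
      have hue : Real.exp (-z) * Real.exp β ≤ 1 := by
        rw [← Real.exp_add]
        exact Real.exp_le_one_iff.2 (by linarith)
      have hu : 0 < Real.exp (-z) := Real.exp_pos _
      nlinarith [mul_nonneg hκpos.le hu.le, sq_nonneg (κ * Real.exp (-z))]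
    have hGval : G - 1 = p0 * κ * S_in * M / ((b + Dstar) * (κ + Real.exp β)) := by
      rw [hG]; ring
    calc |deriv μ (S_in / (κ * Real.exp (-z) + 1))| *
          (S_in * (κ * Real.exp (-z)) / (κ * Real.exp (-z) + 1) ^ 2) / μ Sstar
        ≤ M * (S_in * (κ * Real.exp (-z)) / (κ * Real.exp (-z) + 1) ^ 2) / μ Sstar := by
          gcongr
      _ = (M * S_in * κ * p0 / (b + Dstar)) *
            (Real.exp (-z) / (κ * Real.exp (-z) + 1) ^ 2) := by
          rw [hμSval]
          field_simp
      _ ≤ (M * S_in * κ * p0 / (b + Dstar)) * (1 / (κ + Real.exp β)) := by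
          apply mul_le_mul_of_nonneg_left hkey2
          have h0 : 0 ≤ M * S_in * κ * p0 :=
            mul_nonneg (mul_nonneg (mul_nonneg hM0 hSin.le) hκpos.le) hp0.le
          exact div_nonneg h0 hbD.le
      _ = G - 1 := by
          rw [hGval]
          field_simp
  -- Lipschitz-type estimate for g between β and x2bar
  have hLip : g β - g x2bar ≤ (G - 1) * (x2bar - β) := by
    have hmv := Convex.norm_image_sub_le_of_norm_hasDerivWithin_le
      (f := g) (f' := fun z => deriv g z) (C := G - 1) (s := Set.Icc β x2bar)
      (fun z hz => ((hgd z).congr_deriv (hgd z).deriv.symm).hasDerivWithinAt)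
      (fun z hz => hgL z hz.1) (convex_Icc β x2bar)
      (Set.left_mem_Icc.2 hx2bar.le) (Set.right_mem_Icc.2 hx2bar.le)
    rw [Real.norm_eq_abs, Real.norm_eq_abs, abs_of_pos (by linarith : (0:ℝ) < x2bar - β)] at hmv
    calc g β - g x2bar = -(g x2bar - g β) := by ring
      _ ≤ |g x2bar - g β| := neg_le_abs _
      _ ≤ (G - 1) * (x2bar - β) := hmv
  -- main argument
  intro D hDlip hDnn x hx hx20 hinit t ht
  by_contra hlt
  push_neg at hlt
  -- component derivatives
  have hx1d : ∀ s, 0 ≤ s → HasDerivAt (fun u => (x u).1)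
      (b * (g (x s).2 - 1) + Dstar * g (x s).2 * (1 - Real.exp (x s).1)) s := by
    intro s hs
    simpa using ((hx s hs).hasFDerivAt.fst).hasDerivAt
  have hx2d : ∀ s, 0 ≤ s → HasDerivAt (fun u => (x u).2)
      (p (x s).2 * (D (x s) - Dstar * g (x s).2 * Real.exp (x s).1)) s := by
    intro s hs
    simpa using ((hx s hs).hasFDerivAt.snd).hasDerivAt
  have hx2cont : ContinuousOn (fun u => (x u).2) (Set.Icc 0 t) :=
    fun s hs => ((hx2d s hs.1).continuousAt).continuousWithinAt
  -- the first time x2 hits β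
  set A : Set ℝ := Set.Icc 0 t ∩ (fun u => (x u).2) ⁻¹' Set.Iic β with hA
  have hA_closed : IsClosed A :=
    hx2cont.preimage_isClosed_of_isClosed isClosed_Icc isClosed_Iic
  have hA_ne : A.Nonempty := ⟨t, ⟨ht, le_rfl⟩, hlt.le⟩
  have hA_bdd : BddBelow A := ⟨0, fun s hs => hs.1.1⟩
  set T : ℝ := sInf A with hTdef
  have hTA : T ∈ A := hA_closed.csInf_mem hA_ne hA_bdd
  have hT0 : 0 ≤ T := hTA.1.1
  have hTt : T ≤ t := hTA.1.2
  have hx2T_le : (x T).2 ≤ β := hTA.2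
  have hTpos : 0 < T := by
    rcases eq_or_lt_of_le hT0 with h | h
    · exfalso
      rw [← h] at hx2T_le
      rw [hx20] at hx2T_le
      linarith
    · exact h
  have h_beta_lt : ∀ s, 0 ≤ s → s < T → β < (x s).2 := by
    intro s hs hsT
    by_contra hc
    push_neg at hc
    have hsA : s ∈ A := ⟨⟨hs, hsT.le.trans hTt⟩, hc⟩
    exact absurd (csInf_le hA_bdd hsA) (not_le.2 hsT)
  -- x2 ≥ β on [0, T]
  have h_ge : ∀ s ∈ Set.Icc (0:ℝ) T, β ≤ (x s).2 := by
    have hBclosed : IsClosed (Set.Icc 0 T ∩ (fun u => (x u).2) ⁻¹' Set.Ici β) :=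
      (hx2cont.mono (Set.Icc_subset_Icc le_rfl hTt)).preimage_isClosed_of_isClosed
        isClosed_Icc isClosed_Ici
    have hsub : Set.Ico (0:ℝ) T ⊆ Set.Icc 0 T ∩ (fun u => (x u).2) ⁻¹' Set.Ici β :=
      fun s hs => ⟨⟨hs.1, hs.2.le⟩, (h_beta_lt s hs.1 hs.2).le⟩
    have hcl := closure_minimal hsub hBclosed
    rw [closure_Ico hTpos.ne] at hcl
    exact fun s hs => (hcl hs).2
  -- on [0,T], (b+D*) g(x2) ≤ b - θ
  have hgx2_le : ∀ s ∈ Set.Icc (0:ℝ) T, (b + Dstar) * g (x s).2 ≤ b - θ := by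
    intro s hs
    have h1 : g (x s).2 ≤ g β :=
      hg_anti (Set.self_mem_Ici) (h_ge s hs) (h_ge s hs)
    calc (b + Dstar) * g (x s).2 ≤ (b + Dstar) * g β :=
          mul_le_mul_of_nonneg_left h1 hbD.le
      _ = b - θ := hβ
  -- x1 decays: x1(s) ≤ x1(0) - θ s on [0,T]
  have hψd : ∀ s, 0 ≤ s → HasDerivAt (fun u => (x u).1 + θ * u)
      (b * (g (x s).2 - 1) + Dstar * g (x s).2 * (1 - Real.exp (x s).1) + θ) s := by
    intro s hs
    have h2 : HasDerivAt (fun u : ℝ => θ * u) θ s := by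
      simpa using (hasDerivAt_id s).const_mul θ
    exact (hx1d s hs).add h2
  have hψ_anti : AntitoneOn (fun u => (x u).1 + θ * u) (Set.Icc 0 T) := by
    apply antitoneOn_of_deriv_nonpos (convex_Icc 0 T)
    · exact fun s hs => ((hψd s hs.1).continuousAt).continuousWithinAt
    · rw [interior_Icc]
      exact fun s hs => (hψd s hs.1.le).differentiableAt.differentiableWithinAt
    · rw [interior_Icc]
      intro s hs
      rw [(hψd s hs.1.le).deriv]
      have hle := hgx2_le s ⟨hs.1.le, hs.2.le⟩
      have hgn := hg_nonneg (x s).2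
      have hE := Real.exp_pos (x s).1
      nlinarith [mul_nonneg (mul_nonneg hDstar.le hgn) hE.le]
  have hx1_le : ∀ s ∈ Set.Icc (0:ℝ) T, (x s).1 ≤ (x 0).1 - θ * s := by
    intro s hs
    have h := hψ_anti (Set.left_mem_Icc.2 hT0) hs hs.1
    simp only at h
    linarith
  -- the key constant
  set C : ℝ := (κ + 1) * Dstar * g β * Real.exp (x 0).1 with hCdef
  have hCpos : 0 < C := by positivity
  -- x2' ≥ -C e^{-θ s} on [0,T]
  have hv2 : ∀ s ∈ Set.Icc (0:ℝ) T,
      -(C * Real.exp (-(θ * s))) ≤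
        p (x s).2 * (D (x s) - Dstar * g (x s).2 * Real.exp (x s).1) := by
    intro s hs
    have hx2s := h_ge s hs
    have hp_pos : 0 < p (x s).2 := by rw [hp]; positivity
    have hp_le : p (x s).2 ≤ κ + 1 := by
      rw [hp]
      have : Real.exp (-(x s).2) ≤ 1 := Real.exp_le_one_iff.2 (by linarith)
      nlinarith
    have hgle : g (x s).2 ≤ g β := hg_anti Set.self_mem_Ici hx2s hx2s
    have hEle : Real.exp (x s).1 ≤ Real.exp (x 0).1 * Real.exp (-(θ * s)) := by
      rw [← Real.exp_add]
      exact Real.exp_le_exp.2 (by linarith [hx1_le s hs])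
    have hgn := hg_nonneg (x s).2
    have hEpos := Real.exp_pos (x s).1
    have e1 : p (x s).2 * (Dstar * g (x s).2 * Real.exp (x s).1) ≤
        (κ + 1) * (Dstar * g β * (Real.exp (x 0).1 * Real.exp (-(θ * s)))) := by
      apply mul_le_mul hp_le ?_ (by positivity) (by positivity)
      apply mul_le_mul (mul_le_mul_of_nonneg_left hgle hDstar.le) hEle hEpos.le
      positivity
    have e2 : 0 ≤ p (x s).2 * D (x s) := mul_nonneg hp_pos.le (hDnn _)
    have e3 : (κ + 1) * (Dstar * g β * (Real.exp (x 0).1 * Real.exp (-(θ * s)))) =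
        C * Real.exp (-(θ * s)) := by rw [hCdef]; ring
    nlinarith [e1, e2]
  -- φ is monotone
  have hφd : ∀ s, 0 ≤ s → HasDerivAt
      (fun u => (x u).2 - C / θ * Real.exp (-(θ * u)))
      (p (x s).2 * (D (x s) - Dstar * g (x s).2 * Real.exp (x s).1) +
        C * Real.exp (-(θ * s))) s := by
    intro s hs
    have h1 : HasDerivAt (fun u : ℝ => -(θ * u)) (-θ) s := by
      simpa [Pi.neg_def] using ((hasDerivAt_id s).const_mul θ).neg
    have h2 := (h1.exp).const_mul (C / θ)
    have h3 := (hx2d s hs).sub h2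
    have key : C / θ * (Real.exp (-(θ * s)) * -θ) = -(C * Real.exp (-(θ * s))) := by
      rw [show C / θ * (Real.exp (-(θ * s)) * -θ) = -(C * Real.exp (-(θ * s)) * (θ / θ)) by ring,
        div_self hθpos.ne', mul_one]
    exact h3.congr_deriv (by linear_combination -key)
  have hφ_mono : MonotoneOn (fun u => (x u).2 - C / θ * Real.exp (-(θ * u)))
      (Set.Icc 0 T) := by
    apply monotoneOn_of_deriv_nonneg (convex_Icc 0 T)
    · exact fun s hs => ((hφd s hs.1).continuousAt).continuousWithinAt
    · rw [interior_Icc]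
      exact fun s hs => (hφd s hs.1.le).differentiableAt.differentiableWithinAt
    · rw [interior_Icc]
      intro s hs
      rw [(hφd s hs.1.le).deriv]
      have := hv2 s ⟨hs.1.le, hs.2.le⟩
      linarith
  have hφ0T := hφ_mono (Set.left_mem_Icc.2 hT0) (Set.right_mem_Icc.2 hT0) hT0
  simp only at hφ0T
  rw [mul_zero, neg_zero, Real.exp_zero, mul_one] at hφ0T
  have hx2T_ge : x2bar - C / θ ≤ (x T).2 := by
    have hEnn : 0 ≤ Real.exp (-(θ * T)) := (Real.exp_pos _).le
    have hCθ : 0 ≤ C / θ := div_nonneg hCpos.le hθpos.le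
    rw [hx20] at hφ0T
    nlinarith [mul_nonneg hCθ hEnn]
  -- the quantitative contradiction: C < θ (x2bar - β)
  have hCkey : C < θ * (x2bar - β) := by
    set E0 : ℝ := Real.exp (x 0).1 with hE0def
    have hE0pos : 0 < E0 := Real.exp_pos _
    -- from the initial condition
    have step : (κ + 1) * (G * b * Dstar / θ) * E0 ≤ (b + Dstar) * ((G - 1) * (x2bar - β)) := by
      have h4 : (b + Dstar) * (g β - g x2bar) ≤ (b + Dstar) * ((G - 1) * (x2bar - β)) :=
        mul_le_mul_of_nonneg_left hLip hbD.le
      nlinarith [hinit, hβ]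
    have h5 : (κ + 1) * (G * b * Dstar) * E0 ≤ θ * ((b + Dstar) * ((G - 1) * (x2bar - β))) := by
      have heqn : (κ + 1) * (G * b * Dstar / θ) * E0 = (κ + 1) * (G * b * Dstar) * E0 / θ := by
        ring
      rw [heqn] at step
      exact (div_le_iff₀ hθpos).1 step |>.trans_eq (by ring)
    have hGb : 0 < G * b := by nlinarith
    have hmul : (κ + 1) * (G * b * Dstar) * E0 * g β ≤
        θ * ((b + Dstar) * ((G - 1) * (x2bar - β))) * g β :=
      mul_le_mul_of_nonneg_right h5 hgβpos.le
    have hrhs : θ * ((b + Dstar) * ((G - 1) * (x2bar - β))) * g β =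
        θ * (G - 1) * (x2bar - β) * (b - θ) := by
      rw [← hβ]; ring
    have hfin : θ * (G - 1) * (x2bar - β) * (b - θ) < θ * (x2bar - β) * (G * b) := by
      have hΔ : 0 < x2bar - β := by linarith
      have hθΔ : 0 < θ * (x2bar - β) := mul_pos hθpos hΔ
      have hr : (G - 1) * (b - θ) < G * b := by
        nlinarith [mul_nonneg (sub_nonneg.2 hG1) hθpos.le]
      calc θ * (G - 1) * (x2bar - β) * (b - θ) = θ * (x2bar - β) * ((G - 1) * (b - θ)) := by ring
        _ < θ * (x2bar - β) * (G * b) := by exact mul_lt_mul_of_pos_left hr hθΔ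
    have hC_eq : C * (G * b) = (κ + 1) * (G * b * Dstar) * E0 * g β := by
      rw [hCdef, hE0def]; ring
    have : C * (G * b) < θ * (x2bar - β) * (G * b) := by
      rw [hC_eq]
      calc (κ + 1) * (G * b * Dstar) * E0 * g β
          ≤ θ * ((b + Dstar) * ((G - 1) * (x2bar - β))) * g β := hmul
        _ = θ * (G - 1) * (x2bar - β) * (b - θ) := hrhs
        _ < θ * (x2bar - β) * (G * b) := hfin
    exact lt_of_mul_lt_mul_right this hGb.le
  -- conclude
  have : β < (x T).2 := by
    have hCθ : C / θ < x2bar - β := (div_lt_iff₀ hθpos).2 (by linarith [hCkey])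
    linarith [hx2T_ge]
  linarith [hx2T_le]
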